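/- Let G and G' be graphs with adjacency matrices Γ, Γ' over GF(2), related by Γ' = H^A(Γ) = ((A+I)Γ+A)(AΓ+A+I)^{-1} for some diagonal matrix A with AΓ+A+I invertible. If distinct vertices i and j are twins of G (i.e., {i,j} is an edge and columns i and j of Γ+I coincide), then i and j are twins of G'. -/

import Mathlib

open Matrix

theorem twins_invariant {n : ℕ} (Γ Γ' : Matrix (Fin n) (Fin n) (ZMod 2))
    (a : Fin n → ZMod 2)
    (hsym : Γᵀ = Γ) (hdiag : ∀ i, Γ i i = 0)
    (hsym' : Γ'ᵀ = Γ') (hdiag' : ∀ i, Γ' i i = 0)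
    (hinv : IsUnit (diagonal a * Γ + diagonal a + 1))
    (hΓ' : Γ' = ((diagonal a + 1) * Γ + diagonal a) * (diagonal a * Γ + diagonal a + 1)⁻¹)
    (i j : Fin n) (hij : i ≠ j)
    (hedge : Γ i j = 1) (htwin : ∀ k, (Γ + 1) k i = (Γ + 1) k j) :
    Γ' i j = 1 ∧ ∀ k, (Γ' + 1) k i = (Γ' + 1) k j := by
  set A := diagonal a with hA
  set B := A * Γ + A + 1 with hB
  set v : Fin n → ZMod 2 := Pi.single i 1 + Pi.single j 1 with hv
  have hvz : (Γ + 1) *ᵥ v = 0 := by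
    funext k
    simp only [hv, mulVec_add, mulVec_single, Pi.add_apply, Pi.zero_apply, mul_one,
      Pi.smul_apply, Matrix.col_apply, MulOpposite.op_one, one_smul]
    rw [htwin k]
    exact CharTwo.add_self_eq_zero _
  have hBv : B *ᵥ v = v := by
    have hB2 : B = A * (Γ + 1) + 1 := by rw [hB, mul_add, mul_one]
    rw [hB2, add_mulVec, one_mulVec, ← mulVec_mulVec, hvz, mulVec_zero, zero_add]
  have hBinv : B⁻¹ *ᵥ v = v := by
    conv_lhs => rw [← hBv]
    rw [mulVec_mulVec, Matrix.nonsing_inv_mul B ((Matrix.isUnit_iff_isUnit_det B).mp hinv),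
      one_mulVec]
  have key : (A + 1) * Γ + A = A * (Γ + 1) + (Γ + 1) + 1 := by
    have h11 : (1 : Matrix (Fin n) (Fin n) (ZMod 2)) + 1 = 0 := by
      ext p q
      exact CharTwo.add_self_eq_zero _
    rw [mul_add, mul_one, add_mul, one_mul,
      show A * Γ + A + (Γ + 1) + 1 = A * Γ + Γ + A + (1 + 1) from by abel, h11, add_zero]
  have hΓ'v : Γ' *ᵥ v = v := by
    rw [hΓ', ← mulVec_mulVec, hBinv, key, add_mulVec, add_mulVec,
      ← mulVec_mulVec, hvz, mulVec_zero, one_mulVec, zero_add, zero_add]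
  have h1 : Γ' i j = 1 := by
    have h := congrFun hΓ'v i
    simp only [hv, mulVec_add, mulVec_single, Pi.add_apply, mul_one,
      Pi.smul_apply, Matrix.col_apply, MulOpposite.op_one, one_smul, hdiag' i,
      Pi.single_eq_same, zero_add, add_zero] at h
    rw [Pi.single_eq_of_ne hij, add_zero] at h
    exact h
  refine ⟨h1, fun k => ?_⟩
  have h2 : (Γ' + 1) *ᵥ v = 0 := by
    rw [add_mulVec, hΓ'v, one_mulVec]
    funext l
    exact CharTwo.add_self_eq_zero (v l)
  have h3 := congrFun h2 k
  simp only [hv, mulVec_add, mulVec_single, Pi.add_apply, Pi.zero_apply, mul_one] at h3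
  simpa using CharTwo.add_eq_iff_eq_add.mp h3
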